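/- Let A ∈ ℝ^{V×W} and let (𝒫, 𝒬) be an equitable partition of A. Define X ∈ ℝ^{V×V} by X_{vv'} = 1/|P| if v, v' lie in the same class P ∈ 𝒫 and 0 otherwise, and define Y ∈ ℝ^{W×W} analogously from 𝒬. Then X and Y are doubly stochastic and XA = AY, i.e., (X, Y) is a fractional automorphism of A. -/

import Mathlib

open Finset Matrix
open scoped Classical

/-- A doubly stochastic matrix: nonnegative with all row sums and column sums equal to 1. -/
def DoublyStochastic {V : Type*} [Fintype V] (X : Matrix V V ℝ) : Prop :=
  (∀ i j, 0 ≤ X i j) ∧ (∀ i, ∑ j, X i j = 1) ∧ (∀ j, ∑ i, X i j = 1)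

/-- An equitable partition `(𝒫, 𝒬)` of `A ∈ ℝ^{V×W}`, where partitions are encoded as
setoids (equivalence relations) `s` on `V` and `t` on `W`: for every class `P` of `s` and
`Q` of `t`, the row sums `∑_{w ∈ Q} A v w` agree for all `v ∈ P`, and the column sums
`∑_{v ∈ P} A v w` agree for all `w ∈ Q`. -/
def Equitable {V W : Type*} [Fintype V] [Fintype W] (A : Matrix V W ℝ)
    (s : Setoid V) (t : Setoid W) : Prop :=
  (∀ v v', s.r v v' → ∀ w : W,
      ∑ w' ∈ univ.filter (fun w' => t.r w w'), A v w' =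
      ∑ w' ∈ univ.filter (fun w' => t.r w w'), A v' w') ∧
  (∀ w w', t.r w w' → ∀ v : V,
      ∑ v' ∈ univ.filter (fun v' => s.r v v'), A v' w =
      ∑ v' ∈ univ.filter (fun v' => s.r v v'), A v' w')

lemma class_eq {V : Type*} [Fintype V] (s : Setoid V) {v v' : V} (hvv : s.r v v') :
    univ.filter (fun u => s.r v u) = univ.filter (fun u => s.r v' u) := by
  ext u; simp only [mem_filter, mem_univ, true_and]
  exact ⟨fun h => s.trans (s.symm hvv) h, fun h => s.trans hvv h⟩

lemma class_card_pos {V : Type*} [Fintype V] (s : Setoid V) (v : V) :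
    0 < (univ.filter (fun u => s.r v u)).card :=
  card_pos.2 ⟨v, by simp only [mem_filter, mem_univ, true_and]; exact s.refl v⟩

lemma row_sum {V : Type*} [Fintype V] (s : Setoid V) (X : Matrix V V ℝ)
    (hX : ∀ v v', X v v' =
      if s.r v v' then ((univ.filter (fun u => s.r v u)).card : ℝ)⁻¹ else 0)
    (i : V) : ∑ j, X i j = 1 := by
  have hc : ((univ.filter (fun u => s.r i u)).card : ℝ) ≠ 0 := by
    exact_mod_cast (class_card_pos s i).ne'
  simp_rw [hX]
  rw [← Finset.sum_filter, Finset.sum_const, nsmul_eq_mul, mul_inv_cancel₀ hc]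

lemma ds_of_setoid {V : Type*} [Fintype V] (s : Setoid V) (X : Matrix V V ℝ)
    (hX : ∀ v v', X v v' =
      if s.r v v' then ((univ.filter (fun u => s.r v u)).card : ℝ)⁻¹ else 0) :
    DoublyStochastic X := by
  have hX' : ∀ v v', X v v' =
      if s.r v' v then ((univ.filter (fun u => s.r v' u)).card : ℝ)⁻¹ else 0 := by
    intro v v'
    rw [hX]
    split_ifs with h1 h2 h2
    · rw [class_eq s h1]
    · exact absurd (s.symm h1) h2
    · exact absurd (s.symm h2) h1
    · rfl
  refine ⟨fun i j => ?_, row_sum s X hX, fun j => ?_⟩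
  · rw [hX]; split
    · positivity
    · exact le_rfl
  · simp_rw [hX']
    have hc : ((univ.filter (fun u => s.r j u)).card : ℝ) ≠ 0 := by
      exact_mod_cast (class_card_pos s j).ne'
    rw [← Finset.sum_filter, Finset.sum_const, nsmul_eq_mul, mul_inv_cancel₀ hc]

theorem equitable_gives_fractional_automorphism'
    {V W : Type*} [Fintype V] [Fintype W] (A : Matrix V W ℝ)
    (s : Setoid V) (t : Setoid W)
    (h : (∀ v v', s.r v v' → ∀ w : W,
      ∑ w' ∈ univ.filter (fun w' => t.r w w'), A v w' =
      ∑ w' ∈ univ.filter (fun w' => t.r w w'), A v' w') ∧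
  (∀ w w', t.r w w' → ∀ v : V,
      ∑ v' ∈ univ.filter (fun v' => s.r v v'), A v' w =
      ∑ v' ∈ univ.filter (fun v' => s.r v v'), A v' w'))
    (X : Matrix V V ℝ) (Y : Matrix W W ℝ)
    (hX : ∀ v v', X v v' =
      if s.r v v' then ((univ.filter (fun u => s.r v u)).card : ℝ)⁻¹ else 0)
    (hY : ∀ w w', Y w w' =
      if t.r w w' then ((univ.filter (fun u => t.r w u)).card : ℝ)⁻¹ else 0) :
    X * A = A * Y := by
  have hY' : ∀ w w', Y w w' =
      if t.r w' w then ((univ.filter (fun u => t.r w' u)).card : ℝ)⁻¹ else 0 := by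
    intro w w'
    rw [hY]
    split_ifs with h1 h2 h2
    · rw [class_eq t h1]
    · exact absurd (t.symm h1) h2
    · exact absurd (t.symm h2) h1
    · rfl
  ext v w
  rw [Matrix.mul_apply, Matrix.mul_apply]
  have hcP : ((univ.filter (fun u => s.r v u)).card : ℝ) ≠ 0 := by
    exact_mod_cast (class_card_pos s v).ne'
  have hcQ : ((univ.filter (fun u => t.r w u)).card : ℝ) ≠ 0 := by
    exact_mod_cast (class_card_pos t w).ne'
  have lhs : ∑ v', X v v' * A v' w =
      ((univ.filter (fun u => s.r v u)).card : ℝ)⁻¹ *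
        ∑ v' ∈ univ.filter (fun u => s.r v u), A v' w := by
    rw [Finset.mul_sum]
    rw [← Finset.sum_filter_of_ne (p := fun v' => s.r v v') (fun v' _ hne => by
      by_contra hr; exact hne (by rw [hX, if_neg hr, zero_mul]))]
    exact Finset.sum_congr rfl fun v' hv' => by
      rw [hX, if_pos (by simpa using hv')]
  have rhs : ∑ w', A v w' * Y w' w =
      ((univ.filter (fun u => t.r w u)).card : ℝ)⁻¹ *
        ∑ w' ∈ univ.filter (fun u => t.r w u), A v w' := by
    rw [Finset.mul_sum]
    rw [← Finset.sum_filter_of_ne (p := fun w' => t.r w w') (fun w' _ hne => by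
      by_contra hr; refine hne ?_
      rw [hY w' w]
      split_ifs with hc
      · exact absurd (t.symm hc) hr
      · exact mul_zero _)]
    refine Finset.sum_congr rfl fun w' hw' => ?_
    have hww' : t.r w w' := by simpa using hw'
    rw [hY w' w]
    split_ifs with hc
    · rw [class_eq t (t.symm hww'), mul_comm]
    · exact absurd (t.symm hww') hc
  rw [lhs, rhs]
  -- double counting
  have key1 : ∑ v' ∈ univ.filter (fun u => s.r v u), ∑ w' ∈ univ.filter (fun u => t.r w u), A v' w'
      = ((univ.filter (fun u => s.r v u)).card : ℝ) * ∑ w' ∈ univ.filter (fun u => t.r w u), A v w' := by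
    rw [Finset.sum_congr rfl (fun v' hv' => (h.1 v v' (by simpa using hv') w).symm),
      Finset.sum_const, nsmul_eq_mul]
  have key2 : ∑ v' ∈ univ.filter (fun u => s.r v u), ∑ w' ∈ univ.filter (fun u => t.r w u), A v' w'
      = ((univ.filter (fun u => t.r w u)).card : ℝ) * ∑ v' ∈ univ.filter (fun u => s.r v u), A v' w := by
    rw [Finset.sum_comm (f := A),
      Finset.sum_congr rfl (fun w' hw' => (h.2 w w' (by simpa using hw') v).symm),
      Finset.sum_const, nsmul_eq_mul]
  field_simp
  rw [mul_comm (∑ v' ∈ _, A v' w), ← key1, ← key2]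

/-- If `(𝒫, 𝒬)` is an equitable partition of `A`, and `X`, `Y` are the
matrices with `X v v' = 1/|P|` whenever `v, v'` lie in the same class `P` (and `0` otherwise),
analogously for `Y`, then `X` and `Y` are doubly stochastic and `X A = A Y`, i.e. `(X, Y)`
is a fractional automorphism of `A`. -/
theorem equitable_gives_fractional_automorphism
    {V W : Type*} [Fintype V] [Fintype W] (A : Matrix V W ℝ)
    (s : Setoid V) (t : Setoid W) (h : Equitable A s t)
    (X : Matrix V V ℝ) (Y : Matrix W W ℝ)
    (hX : ∀ v v', X v v' =
      if s.r v v' then ((univ.filter (fun u => s.r v u)).card : ℝ)⁻¹ else 0)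
    (hY : ∀ w w', Y w w' =
      if t.r w w' then ((univ.filter (fun u => t.r w u)).card : ℝ)⁻¹ else 0) :
    DoublyStochastic X ∧ DoublyStochastic Y ∧ X * A = A * Y :=
  ⟨ds_of_setoid s X hX, ds_of_setoid t Y hY,
    equitable_gives_fractional_automorphism' A s t h X Y hX hY⟩
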